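/- In the setting of the smooth Feshbach-Schur map with both H = T + W : D(T) → H and F_χ(H) : D(T) ∩ V → V boundedly invertible (where Ran χ ⊆ V ⊆ H, T maps D(T)∩V into V, and χ̄T^{-1}χ̄ V ⊆ V), the identity H^{-1} = Q_χ(H) F_χ(H)^{-1} Q_χ^#(H) + χ̄ H_{χ̄}^{-1} χ̄ holds, where Q_χ(H) = χ − χ̄H_{χ̄}^{-1}χ̄Wχ and Q_χ^#(H) = χ − χWχ̄H_{χ̄}^{-1}χ̄. -/

import Mathlib

/-- Smooth Feshbach–Schur map, isospectrality (i), first identity: if `H = T + W` is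
boundedly invertible with inverse `Hi`, and `F_χ(H)` is boundedly invertible on `V`
with inverse `G` (where `Ran χ ⊆ V`, `T(V ∩ D(T)) ⊆ V` and `χ̄T⁻¹χ̄ V ⊆ V`), then
`H⁻¹ = Q_χ(H) F_χ(H)⁻¹ Q_χ^#(H) + χ̄ H_χ̄⁻¹ χ̄`. -/
theorem feshbach_inverse_identity
    {𝓗 : Type*} [NormedAddCommGroup 𝓗] [InnerProductSpace ℂ 𝓗] [CompleteSpace 𝓗]
    (χ χb T W R Ti Hi G : 𝓗 →L[ℂ] 𝓗) (V : Submodule ℂ 𝓗)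
    (hχ0 : χ ≠ 0) (hχb0 : χb ≠ 0)
    (hcomm : χ * χb = χb * χ) (hsum : χ * χ + χb * χb = 1)
    (hTχ : χ * T = T * χ) (hTχb : χb * T = T * χb)
    -- `R = H_χ̄⁻¹` on `Ran χ̄`, where `H_χ̄ = T + χ̄Wχ̄`
    (hRleft : ∀ x : 𝓗, R ((T + χb * W * χb) (χb x)) = χb x)
    (hRright : ∀ x : 𝓗, (T + χb * W * χb) (R (χb x)) = χb x)
    (hRsupp : χb * R * χb = R)
    -- `Ti = T⁻¹` on `Ran χ̄`
    (hTileft : ∀ x : 𝓗, Ti (T (χb x)) = χb x)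
    (hTiright : ∀ x : 𝓗, T (Ti (χb x)) = χb x)
    -- the auxiliary subspace `V`
    (hV : LinearMap.range (χ : 𝓗 →ₗ[ℂ] 𝓗) ≤ V)
    (hTV : ∀ v ∈ V, T v ∈ V)
    (hTiV : ∀ v ∈ V, (χb * Ti * χb) v ∈ V)
    -- `Hi = H⁻¹` where `H = T + W`
    (hHi₁ : (T + W) * Hi = 1) (hHi₂ : Hi * (T + W) = 1)
    -- `G = F_χ(H)⁻¹` on `V`
    (hGV : ∀ v ∈ V, G v ∈ V)
    (hG₁ : ∀ v ∈ V, (T + χ * W * χ - χ * W * χb * R * χb * W * χ) (G v) = v)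
    (hG₂ : ∀ v ∈ V, G ((T + χ * W * χ - χ * W * χb * R * χb * W * χ) v) = v) :
    Hi = (χ - χb * R * χb * W * χ) * G * (χ - χ * W * χb * R * χb)
        + χb * R * χb := by
  -- pointwise versions of operator identities
  have hs : ∀ v : 𝓗, χ (χ v) + χb (χb v) = v := fun v => by
    have := congrArg (fun f : 𝓗 →L[ℂ] 𝓗 => f v) hsum
    simpa [ContinuousLinearMap.mul_apply] using this
  have hs' : ∀ v : 𝓗, χ (χ v) = v - χb (χb v) := fun v =>
    eq_sub_of_add_eq (hs v)
  have hR : ∀ u : 𝓗, R u = χb (R (χb u)) := fun u => by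
    have := congrArg (fun f : 𝓗 →L[ℂ] 𝓗 => f u) hRsupp
    simpa [ContinuousLinearMap.mul_apply] using this.symm
  have hTcb : ∀ w : 𝓗, T (χb w) = χb (T w) := fun w => by
    have := congrArg (fun f : 𝓗 →L[ℂ] 𝓗 => f w) hTχb
    simpa [ContinuousLinearMap.mul_apply] using this.symm
  have hTc : ∀ w : 𝓗, T (χ w) = χ (T w) := fun w => by
    have := congrArg (fun f : 𝓗 →L[ℂ] 𝓗 => f w) hTχ
    simpa [ContinuousLinearMap.mul_apply] using this.symm
  -- T (R u) = χb² u - χb² W R u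
  have hTR : ∀ u : 𝓗, T (R u) = χb (χb u) - χb (χb (W (R u))) := fun u => by
    have h1 := hRright u
    simp only [ContinuousLinearMap.add_apply, ContinuousLinearMap.mul_apply] at h1
    have h2 : T (R (χb u)) = χb u - χb (W (χb (R (χb u)))) := eq_sub_of_add_eq h1
    calc T (R u) = T (χb (R (χb u))) := by rw [← hR]
    _ = χb (T (R (χb u))) := hTcb _
    _ = χb (χb u - χb (W (χb (R (χb u))))) := by rw [h2]
    _ = χb (χb u) - χb (χb (W (R u))) := by rw [map_sub, ← hR]
  -- (T+W)(R u) = χb² u + χ² W R u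
  have hHR : ∀ u : 𝓗, T (R u) + W (R u) = χb (χb u) + χ (χ (W (R u))) := fun u => by
    rw [hTR, hs' (W (R u))]
    abel
  -- the key identity: (T+W) ∘ RHS = 1
  have key : (T + W) * ((χ - χb * R * χb * W * χ) * G * (χ - χ * W * χb * R * χb)
        + χb * R * χb) = 1 := by
    ext x
    simp only [ContinuousLinearMap.mul_apply, ContinuousLinearMap.add_apply,
      ContinuousLinearMap.sub_apply, ContinuousLinearMap.one_apply]
    -- the argument of G
    have harg : χ x - χ (W (χb (R (χb x)))) = χ (x - W (R x)) := by
      rw [map_sub, ← hR]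
    rw [harg]
    set p := x - W (R x) with hp
    have hpV : χ p ∈ V := hV ⟨p, rfl⟩
    set y := G (χ p) with hy
    have hFy := hG₁ (χ p) hpV
    simp only [ContinuousLinearMap.sub_apply, ContinuousLinearMap.add_apply,
      ContinuousLinearMap.mul_apply, ← hy] at hFy
    rw [← hR] at hFy
    -- hFy : T y + χ (W (χ y)) - χ (W (R (W (χ y)))) = χ p
    have hQ : χ y - χb (R (χb (W (χ y)))) = χ y - R (W (χ y)) := by rw [← hR]
    rw [hQ]
    have lhs_eq :
        T (χ y - R (W (χ y)) + χb (R (χb x))) + W (χ y - R (W (χ y)) + χb (R (χb x)))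
        = χ (T y + χ (W (χ y)) - χ (W (R (W (χ y))))) + (χb (χb x) + χ (χ (W (R x)))) := by
      rw [← hR x]
      rw [map_add, map_add, map_sub, map_sub, hTc]
      rw [hTR (W (χ y)), hTR x, map_sub, map_add,
        hs' (W (χ y)), hs' (W (R (W (χ y)))), hs' (W (R x))]
      abel
    rw [lhs_eq, hFy, hp, map_sub, map_sub]
    conv_rhs => rw [← hs x]
    abel
  calc Hi = Hi * ((T + W) * ((χ - χb * R * χb * W * χ) * G * (χ - χ * W * χb * R * χb)
        + χb * R * χb)) := by rw [key, mul_one]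
  _ = (Hi * (T + W)) * ((χ - χb * R * χb * W * χ) * G * (χ - χ * W * χb * R * χb)
        + χb * R * χb) := by rw [← mul_assoc]
  _ = _ := by rw [hHi₂, one_mul]
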